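/- arXiv:1703.10256 — 3 statements merged into one kernel-verified Lean document; each statement's English description precedes it below -/
import Mathlib

section
/- Let M_1,…,M_n be i.i.d. real random variables taking values in a compact interval [a,b], whose common law has a density (with respect to Lebesgue measure) bounded below by a constant c > 0 on [a,b]. Then for every x ∈ [a,b], the expected nearest-neighbor distance satisfies E[ min_{1≤i≤n} |M_i − x| ] ≤ 1 / ( c (n+1) ). -/
open MeasureTheory ProbabilityTheory
open scoped ENNReal NNReal

/-!
STATEMENT 4: Let `M_1,…,M_n` be i.i.d. real random variables taking values in a
compact interval `[a,b]`, whose common law has a density (w.r.t. Lebesgue measure)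
bounded below by a constant `c > 0` on `[a,b]`.  Then for every `x ∈ [a,b]`, the
expected nearest-neighbor distance satisfies
`E[min_{1≤i≤n} |M_i − x|] ≤ 1/(c (n+1))`.
-/

/-- Auxiliary: `Finset.inf'` of measurable functions is measurable. -/
lemma aux_measurable_inf' {Ω : Type*} [MeasurableSpace Ω] {ι : Type*} {s : Finset ι}
    (hs : s.Nonempty) {g : ι → Ω → ℝ} (hg : ∀ i ∈ s, Measurable (g i)) :
    Measurable (fun ω => s.inf' hs (fun i => g i ω)) := by
  have : Measurable (s.inf' hs g) :=
    Finset.inf'_induction hs _ (fun _f hf _g hg => hf.inf hg) fun n hn => hg n hn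
  convert this using 1
  ext ω
  simp [Finset.inf'_apply]

/-- Auxiliary: computation of `∫ t in 0..L, (1 - c*t)^n`. -/
lemma aux_integral_pow (c L : ℝ) (hc : 0 < c) (n : ℕ) :
    ∫ t in (0:ℝ)..L, (1 - c*t)^n
      = (1 - (1 - c*L)^(n+1)) / (c * (n+1)) := by
  have key : ∀ t : ℝ, HasDerivAt (fun t => -(1 - c*t)^(n+1) / (c*(n+1))) ((1 - c*t)^n) t := by
    intro t
    have h1 : HasDerivAt (fun t : ℝ => 1 - c*t) (-c) t := by
      simpa using ((hasDerivAt_id t).const_mul c).const_sub (1:ℝ)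
    have h2 : HasDerivAt (fun t : ℝ => (1 - c*t)^(n+1))
        (((n+1 : ℕ) : ℝ) * (1 - c*t)^n * (-c)) t := h1.pow (n+1)
    have h3 := (h2.neg.div_const (c*(n+1)))
    refine h3.congr_deriv ?_
    push_cast
    rw [div_eq_iff (by positivity)]
    ring
  rw [intervalIntegral.integral_eq_sub_of_hasDerivAt (fun t _ => key t)]
  · simp only [mul_zero, sub_zero, one_pow]
    ring
  · exact (Continuous.intervalIntegrable (by continuity) _ _)

theorem nearest_neighbor_distance_expectation_bound
    {Ω : Type*} [MeasurableSpace Ω] (P : Measure Ω) [IsProbabilityMeasure P]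
    (n : ℕ) (hn : 0 < n)
    (M : Fin n → Ω → ℝ) (hMmeas : ∀ i, Measurable (M i))
    (a b : ℝ) (hab : a ≤ b)
    -- common law: density f with respect to Lebesgue measure
    (f : ℝ → ℝ≥0∞) (hf : Measurable f)
    (hlaw : ∀ i, Measure.map (M i) P = MeasureTheory.volume.withDensity f)
    -- independence
    (hindep : iIndepFun M P)
    -- the variables take values in [a,b]
    (hsupp : ∀ i, ∀ᵐ ω ∂P, M i ω ∈ Set.Icc a b)
    -- the density is bounded below by c > 0 on [a,b]
    (c : ℝ) (hc : 0 < c)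
    (hfc : ∀ t ∈ Set.Icc a b, ENNReal.ofReal c ≤ f t)
    (x : ℝ) (hx : x ∈ Set.Icc a b) :
    ∫ ω, Finset.univ.inf' (Finset.univ_nonempty_iff.mpr ⟨⟨0, hn⟩⟩)
        (fun i => |M i ω - x|) ∂P
      ≤ 1 / (c * (n + 1)) := by
  have hne : (Finset.univ : Finset (Fin n)).Nonempty := Finset.univ_nonempty_iff.mpr ⟨⟨0, hn⟩⟩
  set Y : Ω → ℝ := fun ω => Finset.univ.inf' hne (fun i => |M i ω - x|) with hYdef
  have i0 : Fin n := ⟨0, hn⟩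
  -- the common law is a probability measure
  have hlaw_univ : (MeasureTheory.volume.withDensity f) Set.univ = 1 := by
    rw [← hlaw i0]
    rw [Measure.map_apply (hMmeas i0) MeasurableSet.univ]
    simp
  -- c * (b - a) ≤ 1
  have hIcc_lb : ∀ l u : ℝ, Set.Icc l u ⊆ Set.Icc a b →
      ENNReal.ofReal (c * (u - l)) ≤ (MeasureTheory.volume.withDensity f) (Set.Icc l u) := by
    intro l u hsub
    rw [withDensity_apply f measurableSet_Icc]
    calc ENNReal.ofReal (c * (u - l))
        = ENNReal.ofReal c * MeasureTheory.volume (Set.Icc l u) := by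
          rw [Real.volume_Icc, ← ENNReal.ofReal_mul hc.le]
      _ = ∫⁻ _ in Set.Icc l u, ENNReal.ofReal c := by rw [setLIntegral_const]
      _ ≤ ∫⁻ t in Set.Icc l u, f t := by
          refine setLIntegral_mono hf (fun t ht => hfc t (hsub ht))
  have hcb : c * (b - a) ≤ 1 := by
    have h1 : ENNReal.ofReal (c * (b - a)) ≤ 1 := by
      calc ENNReal.ofReal (c * (b - a))
          ≤ (MeasureTheory.volume.withDensity f) (Set.Icc a b) :=
            hIcc_lb a b subset_rfl
        _ ≤ (MeasureTheory.volume.withDensity f) Set.univ := measure_mono (Set.subset_univ _)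
        _ = 1 := hlaw_univ
    rwa [← ENNReal.ofReal_one, ENNReal.ofReal_le_ofReal_iff zero_le_one] at h1
  -- Y is measurable, nonneg, bounded by b - a a.e.
  have hYmeas : Measurable Y :=
    aux_measurable_inf' hne (fun i _ => ((hMmeas i).sub measurable_const).abs)
  have hY0 : ∀ ω, 0 ≤ Y ω := by
    intro ω
    exact Finset.le_inf' hne _ (fun i _ => abs_nonneg _)
  have hYle : ∀ᵐ ω ∂P, Y ω ≤ b - a := by
    filter_upwards [hsupp i0] with ω hω
    calc Y ω ≤ |M i0 ω - x| := Finset.inf'_le _ (Finset.mem_univ i0)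
      _ ≤ b - a := by
          rw [abs_le]
          constructor <;> [nlinarith [hω.1, hω.2, hx.1, hx.2]; nlinarith [hω.1, hω.2, hx.1, hx.2]]
  have hYint : Integrable Y P := by
    refine Integrable.mono' (integrable_const (b - a)) hYmeas.aestronglyMeasurable ?_
    filter_upwards [hYle] with ω hω
    rw [Real.norm_eq_abs, abs_of_nonneg (hY0 ω)]
    exact hω
  -- layercake
  rw [show (∫ ω, Finset.univ.inf' hne (fun i => |M i ω - x|) ∂P) = ∫ ω, Y ω ∂P from rfl]
  rw [hYint.integral_eq_integral_meas_lt (Filter.Eventually.of_forall hY0)]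
  set G : ℝ → ℝ := fun t => (P {ω | t < Y ω}).toReal with hGdef
  -- the single-variable tail bound
  have htail : ∀ t : ℝ, 0 < t → t ≤ b - a →
      P {ω | t < Y ω} ≤ ENNReal.ofReal ((1 - c*t)^n) := by
    intro t ht htba
    have hct1 : c * t ≤ 1 := le_trans (by nlinarith) hcb
    -- the event as an intersection
    have hset : {ω | t < Y ω} = ⋂ i, (M i) ⁻¹' {y : ℝ | t < |y - x|} := by
      ext ω
      simp only [Set.mem_setOf_eq, Set.mem_iInter, Set.mem_preimage, hYdef, Finset.lt_inf'_iff]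
      exact ⟨fun h i => h i (Finset.mem_univ i), fun h i _ => h i⟩
    have hSmeas : MeasurableSet {y : ℝ | t < |y - x|} :=
      measurableSet_lt measurable_const ((measurable_id.sub measurable_const).abs)
    have hprod : P {ω | t < Y ω} = ∏ i, P ((M i) ⁻¹' {y : ℝ | t < |y - x|}) := by
      rw [hset]
      exact hindep.meas_iInter (fun i => ⟨_, hSmeas, rfl⟩)
    -- single factor bound
    have hfactor : ∀ i, P ((M i) ⁻¹' {y : ℝ | t < |y - x|}) ≤ ENNReal.ofReal (1 - c*t) := by
      intro i
      have hmap : P ((M i) ⁻¹' {y : ℝ | t < |y - x|})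
          = (MeasureTheory.volume.withDensity f) {y : ℝ | t < |y - x|} := by
        rw [← hlaw i, Measure.map_apply (hMmeas i) hSmeas]
      set μ := MeasureTheory.volume.withDensity f
      -- complement contains a long interval
      set l := max a (x - t) with hl
      set u := min b (x + t) with hu
      have hlu : t ≤ u - l := by
        rcases le_or_gt (x + t) b with h1 | h1
        · have : l ≤ x := by simp [hl]; constructor <;> [exact hx.1; linarith]
          simp only [hu, min_eq_right h1] at *
          linarith
        · rcases le_or_gt a (x - t) with h2 | h2
          · simp only [hl, hu, max_eq_right h2, min_eq_left h1.le]
            have := hx.2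
            linarith
          · simp only [hl, hu, max_eq_left h2.le, min_eq_left h1.le]
            linarith
      have hsub1 : Set.Icc l u ⊆ Set.Icc a b := by
        intro y hy
        exact ⟨le_trans (le_max_left a _) hy.1, le_trans hy.2 (min_le_left b _)⟩
      have hsub2 : Set.Icc l u ⊆ {y : ℝ | t < |y - x|}ᶜ := by
        intro y hy
        simp only [Set.mem_compl_iff, Set.mem_setOf_eq, not_lt, abs_le]
        have h1 : x - t ≤ y := le_trans (le_max_right a _) hy.1
        have h2 : y ≤ x + t := le_trans hy.2 (min_le_right b _)
        constructor <;> linarith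
      have hcompl : ENNReal.ofReal (c * t) ≤ μ ({y : ℝ | t < |y - x|}ᶜ) := by
        calc ENNReal.ofReal (c * t) ≤ ENNReal.ofReal (c * (u - l)) := by
              apply ENNReal.ofReal_le_ofReal; nlinarith
          _ ≤ μ (Set.Icc l u) := hIcc_lb l u hsub1
          _ ≤ μ ({y : ℝ | t < |y - x|}ᶜ) := measure_mono hsub2
      -- μ S = 1 - μ Sᶜ
      have hμuniv : μ Set.univ = 1 := hlaw_univ
      have : IsProbabilityMeasure μ := ⟨hμuniv⟩
      rw [hmap]
      have hS : μ {y : ℝ | t < |y - x|} = 1 - μ ({y : ℝ | t < |y - x|}ᶜ) := by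
        rw [eq_comm, ENNReal.sub_eq_of_eq_add (measure_ne_top μ _)]
        rw [measure_add_measure_compl hSmeas, hμuniv]
      rw [hS]
      calc 1 - μ ({y : ℝ | t < |y - x|}ᶜ) ≤ 1 - ENNReal.ofReal (c * t) :=
            tsub_le_tsub_left hcompl 1
        _ = ENNReal.ofReal (1 - c*t) := by
            rw [← ENNReal.ofReal_one, ← ENNReal.ofReal_sub _ (by positivity)]
    calc P {ω | t < Y ω} = ∏ i, P ((M i) ⁻¹' {y : ℝ | t < |y - x|}) := hprod
      _ ≤ ∏ _i : Fin n, ENNReal.ofReal (1 - c*t) := Finset.prod_le_prod' (fun i _ => hfactor i)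
      _ = ENNReal.ofReal ((1 - c*t)^n) := by
          rw [Finset.prod_const, Finset.card_univ, Fintype.card_fin,
            ENNReal.ofReal_pow (by nlinarith)]
  -- tail vanishes beyond b - a
  have htail0 : ∀ t : ℝ, b - a ≤ t → P {ω | t < Y ω} = 0 := by
    intro t htba
    have hnull : P {ω | b - a < Y ω} = 0 := by
      have h := hYle
      rw [ae_iff] at h
      simpa only [not_le] using h
    refine measure_mono_null (fun ω hω => ?_) hnull
    exact lt_of_le_of_lt htba hω
  -- compare integrals
  have hGmeas : Measurable G := by
    apply Measurable.ennreal_toReal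
    exact Antitone.measurable (fun _ _ hst => measure_mono (fun _ h => lt_of_le_of_lt hst h))
  have hG0 : ∀ t, 0 ≤ G t := fun t => ENNReal.toReal_nonneg
  have hG1 : ∀ t, G t ≤ 1 := by
    intro t
    rw [hGdef]
    simp only
    rw [← ENNReal.toReal_one]
    exact ENNReal.toReal_mono ENNReal.one_ne_top prob_le_one
  have hsplit : ∫ t in Set.Ioi 0, G t = ∫ t in Set.Ioc 0 (b-a), G t := by
    have : Set.Ioi (0:ℝ) = Set.Ioc 0 (b-a) ∪ Set.Ioi (b-a) := by
      rw [Set.Ioc_union_Ioi_eq_Ioi]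
      linarith
    rw [this, setIntegral_union (by rw [Set.disjoint_left]; intro t h1 h2; exact absurd h1.2 (not_le.mpr h2)) measurableSet_Ioi]
    · have hzero : ∫ t in Set.Ioi (b-a), G t = 0 := by
        apply setIntegral_eq_zero_of_forall_eq_zero
        intro t ht
        simp only [hGdef]
        rw [htail0 t (le_of_lt ht)]
        simp
      rw [hzero, add_zero]
    · refine Integrable.mono' (integrable_const 1) hGmeas.aestronglyMeasurable.restrict ?_
      filter_upwards with t
      rw [Real.norm_eq_abs, abs_of_nonneg (hG0 t)]
      exact hG1 t
    · refine (integrableOn_zero).congr_fun (fun t ht => ?_) measurableSet_Ioi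
      simp only [hGdef]
      rw [htail0 t (le_of_lt ht)]
      simp
  change ∫ t in Set.Ioi 0, G t ≤ 1 / (c * (n + 1))
  rw [hsplit]
  have hLnn : (0:ℝ) ≤ b - a := by linarith
  have hmono : ∫ t in Set.Ioc 0 (b-a), G t ≤ ∫ t in Set.Ioc 0 (b-a), (1 - c*t)^n := by
    apply setIntegral_mono_on
    · refine Integrable.mono' (integrable_const 1) hGmeas.aestronglyMeasurable.restrict ?_
      filter_upwards with t
      rw [Real.norm_eq_abs, abs_of_nonneg (hG0 t)]
      exact hG1 t
    · exact (Continuous.integrableOn_Ioc (by continuity))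
    · exact measurableSet_Ioc
    · intro t ht
      have h1 : 0 ≤ 1 - c * t := by nlinarith [ht.1, ht.2]
      exact ENNReal.toReal_le_of_le_ofReal (by positivity) (htail t ht.1 ht.2)
  have hval : ∫ t in Set.Ioc 0 (b-a), (1 - c*t)^n
      = (1 - (1 - c*(b-a))^(n+1)) / (c * (n+1)) := by
    rw [← intervalIntegral.integral_of_le hLnn]
    exact aux_integral_pow c (b-a) hc n
  calc ∫ t in Set.Ioc 0 (b-a), G t ≤ ∫ t in Set.Ioc 0 (b-a), (1 - c*t)^n := hmono
    _ = (1 - (1 - c*(b-a))^(n+1)) / (c * (n+1)) := hval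
    _ ≤ 1 / (c * (n+1)) := by
        have hdpos : (0:ℝ) < c * ((n:ℝ)+1) := by positivity
        have hbase : 0 ≤ 1 - c*(b-a) := by linarith
        have hpow : 0 ≤ (1 - c*(b-a))^(n+1) := by positivity
        gcongr
        linarith
end

section
/- Consider the finite-population matching setup with nearest-neighbor matching on real values: the units of A_M carry fixed values m_j ∈ [a,b], the respondents i ∈ A_R carry values M_i that are i.i.d. random variables supported in [a,b] with density bounded below by c > 0 on [a,b], and each j ∈ A_M is matched to a donor j(1) ∈ A_R minimizing |M_i − m_j|. Suppose π_i ≥ C_1 n / N for all i ∈ A for constants C_1 > 0 and n > 0. Then the matching-discrepancy term B_N = (n^{1/2}/N) Σ_{j∈A_M} π_j^{-1} ( M_{j(1)} − m_j ) satisfies E|B_N| ≤ |A_M| / ( C_1 c n^{1/2} ( n_R + 1 ) ), where n_R = |A_R|. -/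
open MeasureTheory ProbabilityTheory
open scoped ENNReal NNReal

/-!
STATEMENT 5: Finite-population matching with nearest-neighbor matching on real
values: units of `A_M` carry fixed values `m_j ∈ [a,b]`; respondents `i ∈ A_R`
carry values `M_i` that are i.i.d. random variables supported in `[a,b]` with
density bounded below by `c > 0` on `[a,b]`; each `j ∈ A_M` is matched to a donor
`j(1) ∈ A_R` minimizing `|M_i − m_j|`.  If `π_i ≥ C_1 n / N` for all `i ∈ A` with
`C_1 > 0` and `n > 0`, then the matching-discrepancy term
`B_N = (n^{1/2}/N) ∑_{j∈A_M} π_j⁻¹ (M_{j(1)} − m_j)` satisfies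
`E|B_N| ≤ |A_M| / (C_1 c n^{1/2} (n_R + 1))`, where `n_R = |A_R|`.
-/

lemma nn_match_expectation_bound {Ω : Type*} [MeasurableSpace Ω]
    (P : Measure Ω) [IsProbabilityMeasure P]
    {ι : Type*} [Fintype ι] [Nonempty ι]
    (X : ι → Ω → ℝ) (hX : ∀ i, Measurable (X i))
    (f : ℝ → ℝ≥0∞)
    (hlaw : ∀ i, Measure.map (X i) P = MeasureTheory.volume.withDensity f)
    (hindep : iIndepFun X P)
    (a b : ℝ) (hab : a ≤ b) (c : ℝ) (hc : 0 < c)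
    (hfc : ∀ t ∈ Set.Icc a b, ENNReal.ofReal c ≤ f t)
    (hsupp : ∀ i, ∀ᵐ ω ∂P, X i ω ∈ Set.Icc a b)
    (m0 : ℝ) (hm0 : m0 ∈ Set.Icc a b)
    (D : Ω → ℝ) (hD : Measurable D) (hD0 : ∀ ω, 0 ≤ D ω)
    (hDle : ∀ ω i, D ω ≤ |X i ω - m0|) :
    ∫ ω, D ω ∂P ≤ 1 / (c * (Fintype.card ι + 1)) := by
  set ν : Measure ℝ := MeasureTheory.volume.withDensity f with hν
  obtain ⟨i₀⟩ := (inferInstance : Nonempty ι)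
  haveI hνprob : IsProbabilityMeasure ν := by
    rw [← hlaw i₀]
    exact Measure.isProbabilityMeasure_map (hX i₀).aemeasurable
  -- lower bound on ν of subintervals of [a,b]
  have hIcc : ∀ u v : ℝ, a ≤ u → v ≤ b → ENNReal.ofReal (c * (v - u)) ≤ ν (Set.Ioo u v) := by
    intro u v hu hv
    rcases le_or_gt v u with huv | huv
    · simp [ENNReal.ofReal_eq_zero.2 (by nlinarith : c * (v - u) ≤ 0)]
    have hmeas : MeasurableSet (Set.Ioo u v) := measurableSet_Ioo
    rw [hν, withDensity_apply _ hmeas]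
    calc ENNReal.ofReal (c * (v - u))
        = ENNReal.ofReal c * ENNReal.ofReal (v - u) := ENNReal.ofReal_mul hc.le
      _ = ENNReal.ofReal c * MeasureTheory.volume (Set.Ioo u v) := by
          rw [Real.volume_Ioo]
      _ = ∫⁻ _ in Set.Ioo u v, ENNReal.ofReal c := by rw [setLIntegral_const]
      _ ≤ ∫⁻ x in Set.Ioo u v, f x := by
          refine setLIntegral_mono' hmeas fun x hx => hfc x ⟨by linarith [hx.1], by linarith [hx.2]⟩
  have hba1 : c * (b - a) ≤ 1 := by
    have h1 : ENNReal.ofReal (c * (b - a)) ≤ ν Set.univ := le_trans (hIcc a b le_rfl le_rfl)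
      (measure_mono (Set.subset_univ _))
    rw [measure_univ] at h1
    exact ENNReal.ofReal_le_one.mp h1
  set k : ℕ := Fintype.card ι with hk
  -- tail bound
  have tail : ∀ t ∈ Set.Ioc 0 (b - a),
      (P {ω | t ≤ D ω}).toReal ≤ (1 - c * t) ^ k := by
    intro t ht
    have hct1 : c * t ≤ 1 := le_trans (by nlinarith [ht.2, hc] : c * t ≤ c * (b - a)) hba1
    have hct0 : 0 ≤ 1 - c * t := by linarith
    set B : Set ℝ := {x | t ≤ |x - m0|} with hB
    have hBmeas : MeasurableSet B :=
      measurableSet_le measurable_const ((measurable_id.sub_const m0).abs)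
    have hBc : Bᶜ = Set.Ioo (m0 - t) (m0 + t) := by
      ext x
      simp only [hB, Set.mem_compl_iff, Set.mem_setOf_eq, not_le, Set.mem_Ioo, abs_lt,
        abs_sub_lt_iff]
      constructor <;> intro h <;> constructor <;> linarith [h.1, h.2]
    have hνB : ν B ≤ ENNReal.ofReal (1 - c * t) := by
      have h1 : ν B = 1 - ν Bᶜ := by
        have h0 := prob_compl_eq_one_sub (μ := ν) hBmeas.compl
        rwa [compl_compl] at h0
      rw [h1, hBc]
      have hlow : ENNReal.ofReal (c * t) ≤ ν (Set.Ioo (m0 - t) (m0 + t)) := by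
        have key : ∀ u v : ℝ, a ≤ u → v ≤ b → m0 - t ≤ u → v ≤ m0 + t → t ≤ v - u →
            ENNReal.ofReal (c * t) ≤ ν (Set.Ioo (m0 - t) (m0 + t)) := by
          intro u v h1 h2 h3 h4 h5
          refine le_trans ?_ (le_trans (hIcc u v h1 h2)
            (measure_mono (Set.Ioo_subset_Ioo h3 h4)))
          apply ENNReal.ofReal_le_ofReal
          nlinarith [mul_nonneg hc.le (by linarith : (0:ℝ) ≤ v - u - t)]
        rcases le_total a (m0 - t) with h' | h' <;> rcases le_total (m0 + t) b with h'' | h''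
        · exact key (m0 - t) (m0 + t) h' h'' le_rfl le_rfl (by linarith [ht.1])
        · exact key (m0 - t) b h' le_rfl le_rfl (by linarith [hm0.2]) (by linarith [hm0.2])
        · exact key a (m0 + t) le_rfl h'' (by linarith [hm0.1]) le_rfl (by linarith [hm0.1])
        · exact key a b le_rfl le_rfl (by linarith [hm0.1]) (by linarith [hm0.2]) (by linarith [ht.2])
      calc (1 : ℝ≥0∞) - ν (Set.Ioo (m0 - t) (m0 + t)) ≤ 1 - ENNReal.ofReal (c * t) :=
            tsub_le_tsub_left hlow 1
        _ = ENNReal.ofReal (1 - c * t) := by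
            rw [← ENNReal.ofReal_one, ← ENNReal.ofReal_sub _ (mul_nonneg hc.le ht.1.le)]
    have hsub : {ω | t ≤ D ω} ⊆ ⋂ i ∈ (Finset.univ : Finset ι), (X i) ⁻¹' B := by
      intro ω hω
      simp only [Set.mem_iInter, Finset.mem_univ, forall_true_left]
      intro i
      exact le_trans hω (hDle ω i)
    have hprod : P (⋂ i ∈ (Finset.univ : Finset ι), (X i) ⁻¹' B)
        = ∏ i ∈ (Finset.univ : Finset ι), P ((X i) ⁻¹' B) :=
      hindep.meas_biInter (fun i _ => ⟨B, hBmeas, rfl⟩)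
    have hfac : ∀ i : ι, P ((X i) ⁻¹' B) = ν B := by
      intro i
      rw [← Measure.map_apply (hX i) hBmeas, hlaw i]
    have hPle : P {ω | t ≤ D ω} ≤ ENNReal.ofReal ((1 - c * t) ^ k) := by
      calc P {ω | t ≤ D ω} ≤ P (⋂ i ∈ (Finset.univ : Finset ι), (X i) ⁻¹' B) :=
            measure_mono hsub
        _ = ∏ i ∈ (Finset.univ : Finset ι), P ((X i) ⁻¹' B) := hprod
        _ = (ν B) ^ k := by simp [hfac, Finset.prod_const, hk]
        _ ≤ (ENNReal.ofReal (1 - c * t)) ^ k := pow_le_pow_left' hνB k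
        _ = ENNReal.ofReal ((1 - c * t) ^ k) := (ENNReal.ofReal_pow hct0 k).symm
    calc (P {ω | t ≤ D ω}).toReal ≤ (ENNReal.ofReal ((1 - c * t) ^ k)).toReal :=
          ENNReal.toReal_mono ENNReal.ofReal_ne_top hPle
      _ = (1 - c * t) ^ k := ENNReal.toReal_ofReal (by positivity)
  -- integrability of D
  have hDbdd : ∀ᵐ ω ∂P, ‖D ω‖ ≤ b - a := by
    filter_upwards [hsupp i₀] with ω hω
    rw [Real.norm_eq_abs, abs_of_nonneg (hD0 ω)]
    refine (hDle ω i₀).trans (abs_le.mpr ⟨?_, ?_⟩)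
    · linarith [hω.1, hm0.2]
    · linarith [hω.2, hm0.1]
  have hDint : Integrable D P :=
    (integrable_const (b - a)).mono' hD.aestronglyMeasurable hDbdd
  have hDbdd' : D ≤ᵐ[P] fun _ => b - a := by
    filter_upwards [hDbdd] with ω hω
    rw [Real.norm_eq_abs, abs_of_nonneg (hD0 ω)] at hω; exact hω
  rw [hDint.integral_eq_integral_Ioc_meas_le (Filter.Eventually.of_forall hD0) hDbdd']
  -- compare to explicit integral
  have hgmeas : Measurable fun t : ℝ => (P {ω | t ≤ D ω}).toReal := by
    apply Measurable.ennreal_toReal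
    exact Antitone.measurable fun s t hst => measure_mono fun ω hω => le_trans hst hω
  have hgint : IntegrableOn (fun t : ℝ => (P {ω | t ≤ D ω}).toReal) (Set.Ioc 0 (b - a)) := by
    apply Measure.integrableOn_of_bounded (M := 1) measure_Ioc_lt_top.ne
      hgmeas.aestronglyMeasurable
    filter_upwards with t
    rw [Real.norm_eq_abs, abs_of_nonneg ENNReal.toReal_nonneg]
    exact ENNReal.toReal_le_of_le_ofReal one_pos.le (by simpa using prob_le_one)
  have hhcont : Continuous fun t : ℝ => (1 - c * t) ^ k :=
    (continuous_const.sub (continuous_const.mul continuous_id)).pow k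
  have hhint : IntegrableOn (fun t : ℝ => (1 - c * t) ^ k) (Set.Ioc 0 (b - a)) :=
    hhcont.integrableOn_Ioc
  have hmono : ∫ t in Set.Ioc 0 (b - a), (P {ω | t ≤ D ω}).toReal
      ≤ ∫ t in Set.Ioc 0 (b - a), (1 - c * t) ^ k :=
    setIntegral_mono_on hgint hhint measurableSet_Ioc tail
  refine hmono.trans ?_
  -- compute the explicit integral
  have hba0 : 0 ≤ b - a := by linarith
  have hder : ∀ t : ℝ, HasDerivAt (fun t : ℝ => -(1 - c * t) ^ (k + 1) / (c * (k + 1)))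
      ((1 - c * t) ^ k) t := by
    intro t
    have h1 : HasDerivAt (fun t : ℝ => 1 - c * t) (-c) t := by
      simpa using ((hasDerivAt_id t).const_mul c).const_sub 1
    have h2 := (h1.pow (k + 1)).div_const (c * (k + 1))
    have h3 := h2.neg
    convert h3 using 1
    · rfl
    · rfl
    · funext x; rw [neg_div]; rfl
    have h4 : k + 1 - 1 = k := by omega
    rw [h4]
    push_cast
    have hck : c + c * (k:ℝ) ≠ 0 := by positivity
    field_simp
  have hcalc : ∫ t in Set.Ioc 0 (b - a), (1 - c * t) ^ k
      = -(1 - c * (b - a)) ^ (k + 1) / (c * (k + 1)) - -(1 - c * 0) ^ (k + 1) / (c * (k + 1)) := by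
    rw [← intervalIntegral.integral_of_le hba0]
    exact intervalIntegral.integral_eq_sub_of_hasDerivAt (fun t _ => hder t)
      (hhcont.intervalIntegrable 0 (b - a))
  rw [hcalc]
  have hpos : (0 : ℝ) < c * ((k : ℝ) + 1) := by positivity
  have hnn : 0 ≤ (1 - c * (b - a)) ^ (k + 1) := pow_nonneg (by linarith) _
  rw [div_sub_div_same, div_le_div_iff_of_pos_right hpos]
  simp only [mul_zero, sub_zero, one_pow]
  linarith [hnn]

theorem matching_discrepancy_expectation_bound
    {Ω : Type*} [MeasurableSpace Ω] (P : Measure Ω) [IsProbabilityMeasure P]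
    (N : ℕ) (AR AM : Finset (Fin N)) (hAR : AR.Nonempty) (hdisj : Disjoint AR AM)
    -- inclusion probabilities lie in (0,1]
    (π : Fin N → ℝ) (hπ : ∀ i, 0 < π i ∧ π i ≤ 1)
    (a b : ℝ) (hab : a ≤ b)
    -- fixed values of the nonrespondents, lying in [a,b]
    (m : Fin N → ℝ) (hm : ∀ j ∈ AM, m j ∈ Set.Icc a b)
    -- respondent values
    (M : Fin N → Ω → ℝ) (hMmeas : ∀ i, Measurable (M i))
    -- common law on the respondents: density f with respect to Lebesgue measure
    (f : ℝ → ℝ≥0∞) (hf : Measurable f)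
    (hlaw : ∀ i ∈ AR, Measure.map (M i) P = MeasureTheory.volume.withDensity f)
    -- independence across respondents
    (hindep : iIndepFun (fun i : AR => M i.1) P)
    -- respondent values lie in [a,b]
    (hsupp : ∀ i ∈ AR, ∀ᵐ ω ∂P, M i ω ∈ Set.Icc a b)
    -- density bounded below by c > 0 on [a,b]
    (c : ℝ) (hc : 0 < c)
    (hfc : ∀ t ∈ Set.Icc a b, ENNReal.ofReal c ≤ f t)
    -- nearest-neighbor matching: j(1) ∈ A_R attains min_{i∈A_R} |M_i − m_j|
    (donor : Ω → Fin N → Fin N)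
    (hdonor_mem : ∀ ω, ∀ j ∈ AM, donor ω j ∈ AR)
    (hdonor_min : ∀ ω, ∀ j ∈ AM, ∀ i ∈ AR, |M (donor ω j) ω - m j| ≤ |M i ω - m j|)
    (hdonor_meas : ∀ j ∈ AM, Measurable fun ω => M (donor ω j) ω)
    -- lower bound on the inclusion probabilities on the sample A = A_R ∪ A_M
    (C₁ n : ℝ) (hC₁ : 0 < C₁) (hn : 0 < n)
    (hπlow : ∀ i ∈ AR ∪ AM, C₁ * n / N ≤ π i) :
    ∫ ω, |(Real.sqrt n / N) * ∑ j ∈ AM, (π j)⁻¹ * (M (donor ω j) ω - m j)| ∂P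
      ≤ AM.card / (C₁ * c * Real.sqrt n * (AR.card + 1)) := by
  obtain ⟨i₀, hi₀⟩ := hAR
  have hN : 0 < N := i₀.pos
  haveI : Nonempty ↥AR := ⟨⟨i₀, hi₀⟩⟩
  have hs : 0 < Real.sqrt n := Real.sqrt_pos.2 hn
  have hcoef : 0 ≤ Real.sqrt n / N := by positivity
  -- integrability of discrepancies
  have hDmeas : ∀ j ∈ AM, Measurable fun ω => |M (donor ω j) ω - m j| := fun j hj =>
    ((hdonor_meas j hj).sub_const (m j)).abs
  have hint : ∀ j ∈ AM, Integrable (fun ω => |M (donor ω j) ω - m j|) P := by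
    intro j hj
    refine (integrable_const (b - a)).mono' (hDmeas j hj).aestronglyMeasurable ?_
    filter_upwards [hsupp i₀ hi₀] with ω hω
    rw [Real.norm_eq_abs, abs_abs]
    refine (hdonor_min ω j hj i₀ hi₀).trans (abs_le.mpr ⟨?_, ?_⟩)
    · linarith [hω.1, (hm j hj).2]
    · linarith [hω.2, (hm j hj).1]
  -- the key expectation bound for each j
  have key : ∀ j ∈ AM, ∫ ω, |M (donor ω j) ω - m j| ∂P ≤ 1 / (c * (AR.card + 1)) := by
    intro j hj
    have h := nn_match_expectation_bound P (ι := ↥AR) (fun i => M i.1)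
      (fun i => hMmeas i.1) f (fun i => hlaw i.1 i.2) hindep a b hab c hc hfc
      (fun i => hsupp i.1 i.2) (m j) (hm j hj)
      (fun ω => |M (donor ω j) ω - m j|) (hDmeas j hj)
      (fun ω => abs_nonneg _) (fun ω i => hdonor_min ω j hj i.1 i.2)
    rwa [Fintype.card_coe] at h
  -- dominating integrable function
  have hgint : Integrable
      (fun ω => (Real.sqrt n / N) * ∑ j ∈ AM, (π j)⁻¹ * |M (donor ω j) ω - m j|) P :=
    ((integrable_finset_sum AM fun j hj => (hint j hj).const_mul _).const_mul _)
  have step1 : ∫ ω, |(Real.sqrt n / N) * ∑ j ∈ AM, (π j)⁻¹ * (M (donor ω j) ω - m j)| ∂P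
      ≤ ∫ ω, (Real.sqrt n / N) * ∑ j ∈ AM, (π j)⁻¹ * |M (donor ω j) ω - m j| ∂P := by
    refine integral_mono_of_nonneg (Filter.Eventually.of_forall fun ω => abs_nonneg _) hgint
      (Filter.Eventually.of_forall fun ω => ?_)
    dsimp only
    rw [abs_mul, abs_of_nonneg hcoef]
    refine mul_le_mul_of_nonneg_left ?_ hcoef
    refine (Finset.abs_sum_le_sum_abs _ _).trans (le_of_eq ?_)
    refine Finset.sum_congr rfl fun j hj => ?_
    rw [abs_mul, abs_of_nonneg (inv_nonneg.2 (hπ j).1.le)]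
  refine step1.trans ?_
  rw [integral_const_mul]
  rw [integral_finset_sum _ fun j hj => (hint j hj).const_mul _]
  have step2 : ∑ j ∈ AM, ∫ ω, (π j)⁻¹ * |M (donor ω j) ω - m j| ∂P
      ≤ AM.card * ((N / (C₁ * n)) * (1 / (c * (AR.card + 1)))) := by
    calc ∑ j ∈ AM, ∫ ω, (π j)⁻¹ * |M (donor ω j) ω - m j| ∂P
        ≤ ∑ _j ∈ AM, (N / (C₁ * n)) * (1 / (c * (AR.card + 1))) := by
          refine Finset.sum_le_sum fun j hj => ?_
          rw [integral_const_mul]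
          have hπj : C₁ * n / N ≤ π j := hπlow j (Finset.mem_union_right _ hj)
          have hinv : (π j)⁻¹ ≤ N / (C₁ * n) := by
            have h0 : (0:ℝ) < C₁ * n / N := by positivity
            have h1 := inv_anti₀ h0 hπj
            rwa [inv_div] at h1
          exact mul_le_mul hinv (key j hj) (integral_nonneg fun ω => abs_nonneg _)
            (by positivity)
      _ = AM.card * ((N / (C₁ * n)) * (1 / (c * (AR.card + 1)))) := by
          rw [Finset.sum_const, nsmul_eq_mul]
  refine (mul_le_mul_of_nonneg_left step2 hcoef).trans (le_of_eq ?_)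
  set s := Real.sqrt n with hs_def
  have hn2 : n = s * s := (Real.mul_self_sqrt hn.le).symm
  have hN0 : (N:ℝ) ≠ 0 := Nat.cast_ne_zero.2 hN.ne'
  have hcard : ((AR.card:ℝ) + 1) ≠ 0 := Nat.cast_add_one_ne_zero _
  rw [hn2]
  clear_value s
  clear hs_def
  field_simp
end

section
/- On a probability space carrying random variables x_1,…,x_N (values in ℝ^d), δ_1,…,δ_N ∈ {0,1}, y_1,…,y_N ∈ ℝ, I_1,…,I_N ∈ {0,1}, and constants π_1,…,π_N ∈ (0,1], define the filtration F_{N,k} = σ( x_1,…,x_N, δ_1,…,δ_N, y_1,…,y_k, I_1,…,I_k ) for 0 ≤ k ≤ N. Let m_k, κ_k be real F_{N,0}-measurable random variables and g_k an ℝ^q-valued F_{N,0}-measurable random variable, let c_1 ∈ ℝ, c_2 ∈ ℝ^q, n > 0, and set ξ_{N,k} = (n^{1/2}/N)( I_k/π_k − 1 )[ c_1 m_k + ( c_1 (1 + κ_k) + c_2ᵀ g_k ) δ_k ( y_k − m_k ) ]. If each ξ_{N,k} is integrable and for each k, E[ I_k | F_{N,k−1} ∨ σ(y_k) ] = π_k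 almost surely, then the partial-sum process ( Σ_{k=1}^{i} ξ_{N,k} )_{i=0,…,N} is a martingale with respect to the filtration ( F_{N,i} )_{i=0,…,N}. -/
open MeasureTheory ProbabilityTheory Filter
open scoped ENNReal NNReal

/-!
STATEMENT 7: martingale property of the partial sums of the terms
`ξ_{N,k} = (n^{1/2}/N)(I_k/π_k − 1)[c₁ m_k + (c₁ (1+κ_k) + c₂ᵀ g_k) δ_k (y_k − m_k)]`
with respect to the filtration
`F_{N,k} = σ(x_1,…,x_N, δ_1,…,δ_N, y_1,…,y_k, I_1,…,I_k)`,
provided each `ξ_{N,k}` is integrable and `E[I_k | F_{N,k−1} ∨ σ(y_k)] = π_k` a.s.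
(Here units are indexed by `k : Fin N`, the `k`-th unit being unit number `k+1`,
so that `F_{N,k−1} = F k` for the `k`-th unit.)
A finite adapted integrable process `(S_i)_{i≤N}` is a martingale for `(F_{N,i})`
if it is adapted and `E[S_i | F_{N,j}] = S_j` a.s. for all `j ≤ i ≤ N`.
-/

theorem pmm_partial_sum_martingale
    {Ω : Type*} [MeasurableSpace Ω] (P : Measure Ω) [IsProbabilityMeasure P]
    (N d q : ℕ)
    (x : Fin N → Ω → (Fin d → ℝ)) (δ y I : Fin N → Ω → ℝ) (π : Fin N → ℝ)
    (hxmeas : ∀ i, Measurable (x i)) (hδmeas : ∀ i, Measurable (δ i))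
    (hymeas : ∀ i, Measurable (y i)) (hImeas : ∀ i, Measurable (I i))
    (hδ01 : ∀ i ω, δ i ω = 0 ∨ δ i ω = 1)
    (hI01 : ∀ i ω, I i ω = 0 ∨ I i ω = 1)
    (hπ : ∀ i, 0 < π i ∧ π i ≤ 1)
    -- the filtration F_{N,k} = σ(x_1,…,x_N, δ_1,…,δ_N, y_1,…,y_k, I_1,…,I_k)
    (F : ℕ → MeasurableSpace Ω)
    (hF : ∀ k, F k =
      (⨆ i, MeasurableSpace.comap (x i) inferInstance) ⊔
      (⨆ i, MeasurableSpace.comap (δ i) inferInstance) ⊔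
      (⨆ i : Fin N, ⨆ _ : (i : ℕ) < k,
        (MeasurableSpace.comap (y i) inferInstance ⊔
         MeasurableSpace.comap (I i) inferInstance)))
    -- F_{N,0}-measurable coefficients m_k, κ_k (real) and g_k (ℝ^q-valued)
    (m κ : Fin N → Ω → ℝ) (g : Fin N → Ω → (Fin q → ℝ))
    (hm : ∀ k, Measurable[F 0] (m k))
    (hκ : ∀ k, Measurable[F 0] (κ k))
    (hg : ∀ k, Measurable[F 0] (g k))
    (c₁ : ℝ) (c₂ : Fin q → ℝ) (n : ℝ) (hn : 0 < n)
    -- the summands ξ_{N,k}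
    (ξ : Fin N → Ω → ℝ)
    (hξ : ∀ k ω, ξ k ω =
      (Real.sqrt n / N) * (I k ω / π k - 1) *
        (c₁ * m k ω + (c₁ * (1 + κ k ω) + ∑ j, c₂ j * g k ω j) * δ k ω * (y k ω - m k ω)))
    -- integrability of each ξ_{N,k}
    (hint : ∀ k, Integrable (ξ k) P)
    -- E[I_k | F_{N,k−1} ∨ σ(y_k)] = π_k almost surely
    (hcond : ∀ k : Fin N,
      P[I k | F (k : ℕ) ⊔ MeasurableSpace.comap (y k) inferInstance]
        =ᵐ[P] fun _ => π k)
    -- the partial-sum process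
    (S : ℕ → Ω → ℝ)
    (hS : ∀ i ω, S i ω = ∑ k ∈ Finset.univ.filter (fun k : Fin N => (k : ℕ) < i), ξ k ω) :
    -- (S_i)_{i=0,…,N} is a martingale with respect to (F_{N,i})_{i=0,…,N}:
    -- integrable, adapted, with E[S_i | F_{N,j}] = S_j a.s. for j ≤ i ≤ N
    (∀ i ≤ N, Integrable (S i) P) ∧
    (∀ i ≤ N, Measurable[F i] (S i)) ∧
    (∀ j i : ℕ, j ≤ i → i ≤ N → P[S i | F j] =ᵐ[P] S j) := by
  -- ambient σ-algebra
  classical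
  have hFle : ∀ k, F k ≤ ‹MeasurableSpace Ω› := by
    intro k
    rw [hF k]
    refine sup_le (sup_le ?_ ?_) ?_
    · exact iSup_le fun i => (hxmeas i).comap_le
    · exact iSup_le fun i => (hδmeas i).comap_le
    · exact iSup_le fun i => iSup_le fun _ =>
        sup_le (hymeas i).comap_le (hImeas i).comap_le
  have hFmono : ∀ {a b : ℕ}, a ≤ b → F a ≤ F b := by
    intro a b hab
    rw [hF a, hF b]
    refine sup_le_sup le_rfl ?_
    exact iSup_mono fun i => iSup_le fun h => le_iSup_of_le (lt_of_lt_of_le h hab) le_rfl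
  -- measurability of components w.r.t. F j
  have hδF : ∀ (k : Fin N) (j : ℕ), Measurable[F j] (δ k) := by
    intro k j
    rw [measurable_iff_comap_le, hF j]
    exact le_sup_of_le_left (le_sup_of_le_right (le_iSup_of_le k le_rfl))
  have hyF : ∀ (k : Fin N) (j : ℕ), (k : ℕ) < j → Measurable[F j] (y k) := by
    intro k j hkj
    rw [measurable_iff_comap_le, hF j]
    exact le_sup_of_le_right (le_iSup_of_le k (le_iSup_of_le hkj le_sup_left))
  have hIF : ∀ (k : Fin N) (j : ℕ), (k : ℕ) < j → Measurable[F j] (I k) := by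
    intro k j hkj
    rw [measurable_iff_comap_le, hF j]
    exact le_sup_of_le_right (le_iSup_of_le k (le_iSup_of_le hkj le_sup_right))
  -- the "coefficient" part
  set A : Fin N → Ω → ℝ := fun k ω =>
    (Real.sqrt n / N) *
      (c₁ * m k ω + (c₁ * (1 + κ k ω) + ∑ j, c₂ j * g k ω j) * δ k ω * (y k ω - m k ω))
    with hA
  set G : Fin N → MeasurableSpace Ω := fun k =>
    F (k : ℕ) ⊔ MeasurableSpace.comap (y k) inferInstance with hG
  have hGle : ∀ k, G k ≤ ‹MeasurableSpace Ω› := fun k =>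
    sup_le (hFle _) (hymeas k).comap_le
  have hFG : ∀ k : Fin N, F (k : ℕ) ≤ G k := fun k => le_sup_left
  have hyG : ∀ k : Fin N, Measurable[G k] (y k) := by
    intro k
    rw [measurable_iff_comap_le]
    exact le_sup_right
  -- A k is G k - measurable
  have hAmeas : ∀ k : Fin N, Measurable[G k] (A k) := by
    intro k
    have hF0G : F 0 ≤ G k := le_trans (hFmono (Nat.zero_le _)) (hFG k)
    have hmk : Measurable[G k] (m k) := (hm k).mono hF0G le_rfl
    have hκk : Measurable[G k] (κ k) := (hκ k).mono hF0G le_rfl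
    have hgk : ∀ jj, Measurable[G k] (fun ω => g k ω jj) := fun jj =>
      ((measurable_pi_apply jj).comp (hg k)).mono hF0G le_rfl
    have hδk : Measurable[G k] (δ k) := (hδF k _).mono (hFG k) le_rfl
    have hsum : Measurable[G k] (fun ω => ∑ j, c₂ j * g k ω j) :=
      Finset.measurable_sum _ fun jj _ => (measurable_const.mul (hgk jj))
    exact measurable_const.mul
      ((measurable_const.mul hmk).add
        (((measurable_const.mul (measurable_const.add hκk)).add hsum).mul hδk |>.mul
          ((hyG k).sub hmk)))
  -- h k := I k / π k - 1
  set h : Fin N → Ω → ℝ := fun k ω => I k ω / π k - 1 with hh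
  have hξfact : ∀ k : Fin N, ξ k = A k * h k := by
    intro k; funext ω; simp only [hξ, hA, hh, Pi.mul_apply]; ring
  have hhint : ∀ k : Fin N, Integrable (h k) P := by
    intro k
    have : Integrable (I k) P := by
      refine (integrable_const (1 : ℝ)).mono' (hImeas k).aestronglyMeasurable ?_
      filter_upwards with ω
      rcases hI01 k ω with h' | h' <;> simp [h']
    have := ((this.div_const (π k)).sub (integrable_const 1))
    exact this
  -- conditional expectation of h k given G k is 0
  have hcondh : ∀ k : Fin N, P[h k | G k] =ᵐ[P] 0 := by
    intro k
    have hIint : Integrable (I k) P := by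
      refine (integrable_const (1 : ℝ)).mono' (hImeas k).aestronglyMeasurable ?_
      filter_upwards with ω
      rcases hI01 k ω with h' | h' <;> simp [h']
    have h1 : P[fun ω => I k ω / π k | G k] =ᵐ[P] fun _ => 1 := by
      have hsmul : (fun ω => I k ω / π k) = (π k)⁻¹ • (I k) := by
        funext ω; simp [div_eq_inv_mul]
      rw [hsmul]
      refine (condExp_smul (π k)⁻¹ (I k) _).trans ?_
      filter_upwards [hcond k] with ω hω
      simp only [Pi.smul_apply, smul_eq_mul]
      rw [show P[I k|G k] = P[I k|F (k:ℕ) ⊔ MeasurableSpace.comap (y k) inferInstance] from rfl] at hω ⊢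
      rw [hω, inv_mul_cancel₀ (hπ k).1.ne']
    have : P[h k | G k] =ᵐ[P] P[fun ω => I k ω / π k | G k] - P[fun _ : Ω => (1:ℝ) | G k] := by
      have := condExp_sub (μ := P) (m := G k)
        (f := fun ω => I k ω / π k) (g := fun _ => (1:ℝ))
        (hIint.div_const (π k)) (integrable_const 1)
      exact this
    refine this.trans ?_
    have h2 : P[fun _ : Ω => (1:ℝ) | G k] = fun _ => 1 := condExp_const (hGle k) 1
    filter_upwards [h1] with ω hω
    simp [hω, h2]
  -- conditional expectation of ξ k given F j is 0 for j ≤ k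
  have hker : ∀ (k : Fin N) (j : ℕ), j ≤ (k : ℕ) → P[ξ k | F j] =ᵐ[P] 0 := by
    intro k j hjk
    have hstep1 : P[ξ k | G k] =ᵐ[P] 0 := by
      rw [hξfact k]
      refine (condExp_mul_of_stronglyMeasurable_left ((hAmeas k).stronglyMeasurable)
        (by rw [← hξfact k]; exact hint k) (hhint k)).trans ?_
      filter_upwards [hcondh k] with ω hω
      simp [hω]
    have hle : F j ≤ G k := le_trans (hFmono hjk) (hFG k)
    calc P[ξ k | F j] =ᵐ[P] P[P[ξ k | G k] | F j] :=
          (condExp_condExp_of_le hle (hGle k)).symm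
      _ =ᵐ[P] P[(0 : Ω → ℝ) | F j] := condExp_congr_ae hstep1
      _ = 0 := condExp_zero
  -- ξ k is F j-measurable for k < j
  have hξmeas : ∀ (k : Fin N) (j : ℕ), (k : ℕ) < j → Measurable[F j] (ξ k) := by
    intro k j hkj
    have hF0j : F 0 ≤ F j := hFmono (Nat.zero_le _)
    have hmk : Measurable[F j] (m k) := (hm k).mono hF0j le_rfl
    have hκk : Measurable[F j] (κ k) := (hκ k).mono hF0j le_rfl
    have hgk : ∀ jj, Measurable[F j] (fun ω => g k ω jj) := fun jj =>
      ((measurable_pi_apply jj).comp (hg k)).mono hF0j le_rfl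
    have hsum : Measurable[F j] (fun ω => ∑ jj, c₂ jj * g k ω jj) :=
      Finset.measurable_sum _ fun jj _ => (measurable_const.mul (hgk jj))
    have : ξ k = fun ω =>
        (Real.sqrt n / N) * (I k ω / π k - 1) *
          (c₁ * m k ω + (c₁ * (1 + κ k ω) + ∑ jj, c₂ jj * g k ω jj) * δ k ω *
            (y k ω - m k ω)) := funext fun ω => hξ k ω
    rw [this]
    exact ((measurable_const.mul (((hIF k j hkj).div_const _).sub measurable_const)).mul
      ((measurable_const.mul hmk).add
        (((measurable_const.mul (measurable_const.add hκk)).add hsum).mul (hδF k j) |>.mul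
          ((hyF k j hkj).sub hmk))))
  -- now the three parts
  refine ⟨?_, ?_, ?_⟩
  · intro i _
    have : S i = ∑ k ∈ Finset.univ.filter (fun k : Fin N => (k : ℕ) < i), ξ k :=
      funext fun ω => by rw [hS]; simp
    rw [this]
    exact integrable_finset_sum' _ fun k _ => hint k
  · intro i _
    have : S i = fun ω => ∑ k ∈ Finset.univ.filter (fun k : Fin N => (k : ℕ) < i), ξ k ω :=
      funext fun ω => hS i ω
    rw [this]
    exact Finset.measurable_sum _ fun k hk => hξmeas k i (Finset.mem_filter.mp hk).2
  · intro j i hji _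
    have hSi : S i = ∑ k ∈ Finset.univ.filter (fun k : Fin N => (k : ℕ) < i), ξ k :=
      funext fun ω => by rw [hS]; simp
    rw [hSi]
    refine (condExp_finsetSum (fun k _ => hint k) _).trans ?_
    have hterm : ∀ k ∈ Finset.univ.filter (fun k : Fin N => (k : ℕ) < i),
        P[ξ k | F j] =ᵐ[P] (fun ω => if (k : ℕ) < j then ξ k ω else 0) := by
      intro k hk
      by_cases hkj : (k : ℕ) < j
      · simp only [hkj, if_true]
        rw [condExp_of_stronglyMeasurable (hFle j)
          ((hξmeas k j hkj).stronglyMeasurable) (hint k)]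
      · simp only [hkj, if_false]
        exact hker k j (Nat.le_of_not_lt hkj)
    have := eventuallyEq_sum hterm
    refine this.trans ?_
    filter_upwards with ω
    simp only [Finset.sum_apply]
    rw [hS j ω]
    calc ∑ k ∈ Finset.univ.filter (fun k : Fin N => (k : ℕ) < i),
          (if (k : ℕ) < j then ξ k ω else 0)
        = ∑ k ∈ (Finset.univ.filter (fun k : Fin N => (k : ℕ) < i)).filter
            (fun k : Fin N => (k : ℕ) < j), ξ k ω := (Finset.sum_filter _ _).symm
      _ = ∑ k ∈ Finset.univ.filter (fun k : Fin N => (k : ℕ) < j), ξ k ω := by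
            congr 1
            rw [Finset.filter_filter]
            apply Finset.filter_congr
            intro k _
            constructor
            · exact fun hk => hk.2
            · exact fun hk => ⟨lt_of_lt_of_le hk hji, hk⟩
end
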